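/- With the planar-radial vector fields P¹_{i,j} = (z₁w₁)^i (z₂w₂)^j (z₁ ∂/∂z₁ + w₁ ∂/∂w₁) and P²_{m,n} = (z₁w₁)^m (z₂w₂)^n (z₂ ∂/∂z₂ + w₂ ∂/∂w₂) on ℂ⁴, the Lie bracket satisfies [P¹_{i,j}, P²_{m,n}] = 2m P²_{m+i, n+j} − 2j P¹_{m+i, n+j}. -/
import Mathlib


open MvPolynomial

/-- Polynomials on ℂ⁴ with coordinates (z₁, w₁, z₂, w₂). -/
abbrev Poly4 : Type := MvPolynomial (Fin 4) ℂ

/-- Polynomial vector fields on ℂ⁴, identified with their component polynomials. -/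
abbrev VF : Type := Fin 4 → Poly4

/-- Action of a vector field on a polynomial (as a derivation). -/
noncomputable def vAct (v : VF) (p : Poly4) : Poly4 := ∑ i, v i * pderiv i p

/-- Lie bracket of vector fields, [v,w] = vw − wv as differential operators. -/
noncomputable def vBr (v w : VF) : VF := fun k => vAct v (w k) - vAct w (v k)

/-- The monomial (z₁w₁)^m (z₂w₂)^n, i.e. |z₁|^{2m}|z₂|^{2n}. -/
noncomputable def mon (m n : ℕ) : Poly4 := (X 0 * X 1) ^ m * (X 2 * X 3) ^ n

/-- Planar-radial vector field P¹_{m,n} = (z₁w₁)^m (z₂w₂)^n (z₁ ∂/∂z₁ + w₁ ∂/∂w₁). -/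
noncomputable def P1 (m n : ℕ) : VF := fun k => mon m n * ![X 0, X 1, 0, 0] k

/-- Planar-radial vector field P²_{m,n} = (z₁w₁)^m (z₂w₂)^n (z₂ ∂/∂z₂ + w₂ ∂/∂w₂). -/
noncomputable def P2 (m n : ℕ) : VF := fun k => mon m n * ![0, 0, X 2, X 3] k

/-- Planar-rotating vector field R¹_{m,n} = (z₁w₁)^m (z₂w₂)^n (I z₁ ∂/∂z₁ − I w₁ ∂/∂w₁). -/
noncomputable def R1 (m n : ℕ) : VF :=
  fun k => mon m n * ![C Complex.I * X 0, -(C Complex.I) * X 1, 0, 0] k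

/-- Planar-rotating vector field R²_{m,n} = (z₁w₁)^m (z₂w₂)^n (I z₂ ∂/∂z₂ − I w₂ ∂/∂w₂). -/
noncomputable def R2 (m n : ℕ) : VF :=
  fun k => mon m n * ![0, 0, C Complex.I * X 2, -(C Complex.I) * X 3] k

lemma mon_mul (a b c d : ℕ) : mon a b * mon c d = mon (a+c) (b+d) := by
  simp [mon, pow_add]; ring

lemma dX0 (m n : ℕ) : X 0 * pderiv (0 : Fin 4) (mon m n) = C (m : ℂ) * mon m n := by
  cases m with
  | zero => simp [mon, Derivation.leibniz_pow, pderiv_X_of_ne (by decide : (0:Fin 4) ≠ 2), pderiv_X_of_ne (by decide : (0:Fin 4) ≠ 3)]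
  | succ m =>
    simp [mon, Derivation.leibniz_pow, pderiv_X_self, pderiv_X_of_ne (by decide : (0:Fin 4) ≠ 1),
      pderiv_X_of_ne (by decide : (0:Fin 4) ≠ 2), pderiv_X_of_ne (by decide : (0:Fin 4) ≠ 3),
      smul_eq_C_mul]
    ring

lemma dX1 (m n : ℕ) : X 1 * pderiv (1 : Fin 4) (mon m n) = C (m : ℂ) * mon m n := by
  cases m with
  | zero => simp [mon, Derivation.leibniz_pow, pderiv_X_of_ne (by decide : (1:Fin 4) ≠ 2), pderiv_X_of_ne (by decide : (1:Fin 4) ≠ 3)]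
  | succ m =>
    simp [mon, Derivation.leibniz_pow, pderiv_X_self, pderiv_X_of_ne (by decide : (1:Fin 4) ≠ 0),
      pderiv_X_of_ne (by decide : (1:Fin 4) ≠ 2), pderiv_X_of_ne (by decide : (1:Fin 4) ≠ 3),
      smul_eq_C_mul]
    ring

lemma dX2 (m n : ℕ) : X 2 * pderiv (2 : Fin 4) (mon m n) = C (n : ℂ) * mon m n := by
  cases n with
  | zero => simp [mon, Derivation.leibniz_pow, pderiv_X_of_ne (by decide : (2:Fin 4) ≠ 0), pderiv_X_of_ne (by decide : (2:Fin 4) ≠ 1)]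
  | succ n =>
    simp [mon, Derivation.leibniz_pow, pderiv_X_self, pderiv_X_of_ne (by decide : (2:Fin 4) ≠ 0),
      pderiv_X_of_ne (by decide : (2:Fin 4) ≠ 1), pderiv_X_of_ne (by decide : (2:Fin 4) ≠ 3),
      smul_eq_C_mul]
    ring

lemma dX3 (m n : ℕ) : X 3 * pderiv (3 : Fin 4) (mon m n) = C (n : ℂ) * mon m n := by
  cases n with
  | zero => simp [mon, Derivation.leibniz_pow, pderiv_X_of_ne (by decide : (3:Fin 4) ≠ 0), pderiv_X_of_ne (by decide : (3:Fin 4) ≠ 1)]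
  | succ n =>
    simp [mon, Derivation.leibniz_pow, pderiv_X_self, pderiv_X_of_ne (by decide : (3:Fin 4) ≠ 0),
      pderiv_X_of_ne (by decide : (3:Fin 4) ≠ 1), pderiv_X_of_ne (by decide : (3:Fin 4) ≠ 2),
      smul_eq_C_mul]
    ring

theorem bracket_P1_P2 (i j m n : ℕ) :
    vBr (P1 i j) (P2 m n)
      = ((2:ℂ) * (m:ℂ)) • P2 (m+i) (n+j) - ((2:ℂ) * (j:ℂ)) • P1 (m+i) (n+j) := by
  have h2 : (C (2:ℂ) : Poly4) = 2 := by simp [map_ofNat]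
  funext k
  fin_cases k
  · simp only [vBr, vAct, P1, P2, Fin.sum_univ_four, Fin.isValue, Fin.mk_zero,
      Matrix.cons_val_zero, Matrix.cons_val_one, Matrix.head_cons, Matrix.cons_val_two,
      Matrix.tail_cons, Matrix.cons_val_three, Pi.sub_apply, Pi.smul_apply, smul_eq_C_mul,
      map_mul, mul_zero, zero_mul, pderiv_mul, pderiv_X_self,
      pderiv_X_of_ne (by decide : (2:Fin 4) ≠ 0), pderiv_X_of_ne (by decide : (3:Fin 4) ≠ 0),
      mul_one, h2]
    simp only [map_zero, mul_zero, zero_mul, pderiv_X_of_ne (by decide : (0:Fin 4) ≠ 2), pderiv_X_of_ne (by decide : (0:Fin 4) ≠ 3), pderiv_X_of_ne (by decide : (1:Fin 4) ≠ 2), pderiv_X_of_ne (by decide : (1:Fin 4) ≠ 3), pderiv_X_of_ne (by decide : (2:Fin 4) ≠ 0), pderiv_X_of_ne (by decide : (2:Fin 4) ≠ 1), pderiv_X_of_ne (by decide : (3:Fin 4) ≠ 0), pderiv_X_of_ne (by decide : (3:Fin 4) ≠ 1), add_zero, zero_add]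
    rw [← mon_mul m n i j]
    linear_combination (-(mon m n * X 0)) * dX2 i j + (-(mon m n * X 0)) * dX3 i j
  · simp only [vBr, vAct, P1, P2, Fin.sum_univ_four, Fin.isValue, Fin.mk_one,
      Matrix.cons_val_zero, Matrix.cons_val_one, Matrix.head_cons, Matrix.cons_val_two,
      Matrix.tail_cons, Matrix.cons_val_three, Pi.sub_apply, Pi.smul_apply, smul_eq_C_mul,
      map_mul, mul_zero, zero_mul, pderiv_mul, pderiv_X_self,
      pderiv_X_of_ne (by decide : (2:Fin 4) ≠ 1), pderiv_X_of_ne (by decide : (3:Fin 4) ≠ 1),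
      mul_one, h2]
    simp only [map_zero, mul_zero, zero_mul, pderiv_X_of_ne (by decide : (0:Fin 4) ≠ 2), pderiv_X_of_ne (by decide : (0:Fin 4) ≠ 3), pderiv_X_of_ne (by decide : (1:Fin 4) ≠ 2), pderiv_X_of_ne (by decide : (1:Fin 4) ≠ 3), pderiv_X_of_ne (by decide : (2:Fin 4) ≠ 0), pderiv_X_of_ne (by decide : (2:Fin 4) ≠ 1), pderiv_X_of_ne (by decide : (3:Fin 4) ≠ 0), pderiv_X_of_ne (by decide : (3:Fin 4) ≠ 1), add_zero, zero_add]
    rw [← mon_mul m n i j]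
    linear_combination (-(mon m n * X 1)) * dX2 i j + (-(mon m n * X 1)) * dX3 i j
  · simp only [vBr, vAct, P1, P2, Fin.sum_univ_four, Fin.isValue, show (⟨2,by norm_num⟩ : Fin 4) = 2 from rfl,
      Matrix.cons_val_zero, Matrix.cons_val_one, Matrix.head_cons, Matrix.cons_val_two,
      Matrix.tail_cons, Matrix.cons_val_three, Pi.sub_apply, Pi.smul_apply, smul_eq_C_mul,
      map_mul, mul_zero, zero_mul, pderiv_mul, pderiv_X_self,
      pderiv_X_of_ne (by decide : (0:Fin 4) ≠ 2), pderiv_X_of_ne (by decide : (1:Fin 4) ≠ 2),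
      mul_one, h2]
    simp only [map_zero, mul_zero, zero_mul, pderiv_X_of_ne (by decide : (0:Fin 4) ≠ 2), pderiv_X_of_ne (by decide : (0:Fin 4) ≠ 3), pderiv_X_of_ne (by decide : (1:Fin 4) ≠ 2), pderiv_X_of_ne (by decide : (1:Fin 4) ≠ 3), pderiv_X_of_ne (by decide : (2:Fin 4) ≠ 0), pderiv_X_of_ne (by decide : (2:Fin 4) ≠ 1), pderiv_X_of_ne (by decide : (3:Fin 4) ≠ 0), pderiv_X_of_ne (by decide : (3:Fin 4) ≠ 1), add_zero, zero_add]
    rw [← mon_mul m n i j]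
    linear_combination (mon i j * X 2) * dX0 m n + (mon i j * X 2) * dX1 m n
  · simp only [vBr, vAct, P1, P2, Fin.sum_univ_four, Fin.isValue, show (⟨3,by norm_num⟩ : Fin 4) = 3 from rfl,
      Matrix.cons_val_zero, Matrix.cons_val_one, Matrix.head_cons, Matrix.cons_val_two,
      Matrix.tail_cons, Matrix.cons_val_three, Pi.sub_apply, Pi.smul_apply, smul_eq_C_mul,
      map_mul, mul_zero, zero_mul, pderiv_mul, pderiv_X_self,
      pderiv_X_of_ne (by decide : (0:Fin 4) ≠ 3), pderiv_X_of_ne (by decide : (1:Fin 4) ≠ 3),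
      mul_one, h2]
    simp only [map_zero, mul_zero, zero_mul, pderiv_X_of_ne (by decide : (0:Fin 4) ≠ 2), pderiv_X_of_ne (by decide : (0:Fin 4) ≠ 3), pderiv_X_of_ne (by decide : (1:Fin 4) ≠ 2), pderiv_X_of_ne (by decide : (1:Fin 4) ≠ 3), pderiv_X_of_ne (by decide : (2:Fin 4) ≠ 0), pderiv_X_of_ne (by decide : (2:Fin 4) ≠ 1), pderiv_X_of_ne (by decide : (3:Fin 4) ≠ 0), pderiv_X_of_ne (by decide : (3:Fin 4) ≠ 1), add_zero, zero_add]
    rw [← mon_mul m n i j]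
    linear_combination (mon i j * X 3) * dX0 m n + (mon i j * X 3) * dX1 m n
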